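/- Fix M ≥ 0 and for each n ≥ 1 define the truncated nested radical T_n(M) by the backward recursion y_n = √(M^{2^n}) and y_k = √(M^{2^k} + y_{k+1}) for 1 ≤ k < n, setting T_n(M) = y_1. Then T_n(M) = M·x(n−1), where x is the sequence x(0) = 1, x(k+1) = √(1 + x(k)); consequently T_n(M) ≤ φ·M for every n ≥ 1, and T_n(M) converges to φ·M as n → ∞, where φ = (1+√5)/2 is the golden ratio. -/

import Mathlib

/-- Truncated nested radical: with `y n n = √(M^{2^n})`,
`y n k = √(M^{2^k} + y n (k+1))` for `1 ≤ k < n` and `T n = y n 1`, one has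
`T n = M · x (n−1)` where `x 0 = 1`, `x (k+1) = √(1 + x k)`; hence
`T n ≤ φ·M` for all `n ≥ 1` and `T n → φ·M`, with `φ = (1+√5)/2`. -/
theorem truncated_nested_radical (M : ℝ) (hM : 0 ≤ M)
    (y : ℕ → ℕ → ℝ)
    (hyn : ∀ n, 1 ≤ n → y n n = Real.sqrt (M ^ (2 ^ n)))
    (hyk : ∀ n k, 1 ≤ k → k < n → y n k = Real.sqrt (M ^ (2 ^ k) + y n (k + 1)))
    (T : ℕ → ℝ) (hT : ∀ n, 1 ≤ n → T n = y n 1)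
    (x : ℕ → ℝ) (hx0 : x 0 = 1) (hx : ∀ k, x (k + 1) = Real.sqrt (1 + x k)) :
    (∀ n, 1 ≤ n → T n = M * x (n - 1)) ∧
      (∀ n, 1 ≤ n → T n ≤ (1 + Real.sqrt 5) / 2 * M) ∧
      Filter.Tendsto T Filter.atTop (nhds ((1 + Real.sqrt 5) / 2 * M)) := by
  set φ : ℝ := (1 + Real.sqrt 5) / 2 with hφdef
  have hφg : φ = Real.goldenRatio := rfl
  have hφ_sq : φ ^ 2 = φ + 1 := by rw [hφg]; exact Real.goldenRatio_sq
  have hφ_pos : 0 < φ := by rw [hφg]; exact Real.goldenRatio_pos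
  have hφ_gt1 : 1 < φ := by rw [hφg]; exact Real.one_lt_goldenRatio
  -- basic facts about x
  have hx_ge1 : ∀ k, 1 ≤ x k := by
    intro k
    induction k with
    | zero => simp [hx0]
    | succ k ih =>
      rw [hx k]
      have : (1:ℝ) = Real.sqrt 1 := by simp
      rw [this]
      exact Real.sqrt_le_sqrt (by linarith)
  have hx_nn : ∀ k, 0 ≤ x k := fun k => le_trans zero_le_one (hx_ge1 k)
  -- key identity by induction on the distance d = n - k
  have key : ∀ d n k : ℕ, 1 ≤ k → k + d = n →
      y n k = M ^ (2 ^ (k - 1)) * x d := by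
    intro d
    induction d with
    | zero =>
      intro n k hk hkn
      simp only [Nat.add_zero] at hkn
      subst hkn
      rw [hyn k hk, hx0, mul_one]
      have h2 : 2 ^ k = 2 ^ (k - 1) * 2 := by
        rw [← pow_succ, Nat.sub_add_cancel hk]
      rw [h2, pow_mul, Real.sqrt_sq (pow_nonneg hM _)]
    | succ d ih =>
      intro n k hk hkn
      have hkn' : k < n := by omega
      have hk1 : (1:ℕ) ≤ k + 1 := by omega
      have := ih n (k + 1) hk1 (by omega)
      rw [hyk n k hk hkn', this]
      simp only [Nat.add_sub_cancel]
      have h2 : 2 ^ k = 2 ^ (k - 1) * 2 := by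
        rw [← pow_succ, Nat.sub_add_cancel hk]
      have hMk : M ^ (2 ^ k) = (M ^ (2 ^ (k - 1))) ^ 2 := by
        rw [h2, pow_mul]
      have hxd := hx_nn d
      have hMnn : (0:ℝ) ≤ M ^ (2 ^ (k - 1)) := pow_nonneg hM _
      rw [hMk]
      have : (M ^ (2 ^ (k-1))) ^ 2 + (M ^ (2 ^ (k-1))) ^ 2 * x d
          = (M ^ (2 ^ (k-1))) ^ 2 * (1 + x d) := by ring
      rw [this, Real.sqrt_mul (sq_nonneg _), Real.sqrt_sq hMnn, hx d]
  -- first part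
  have part1 : ∀ n, 1 ≤ n → T n = M * x (n - 1) := by
    intro n hn
    rw [hT n hn, key (n - 1) n 1 le_rfl (by omega)]
    norm_num
  -- x k ≤ φ
  have hx_le : ∀ k, x k ≤ φ := by
    intro k
    induction k with
    | zero => rw [hx0]; linarith
    | succ k ih =>
      rw [hx k]
      have : φ = Real.sqrt (1 + φ) := by
        rw [add_comm, ← hφ_sq, Real.sqrt_sq hφ_pos.le]
      rw [this]
      exact Real.sqrt_le_sqrt (by linarith)
  have part2 : ∀ n, 1 ≤ n → T n ≤ φ * M := by
    intro n hn
    rw [part1 n hn, mul_comm]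
    exact mul_le_mul_of_nonneg_right (hx_le _) hM
  -- contraction
  have hcontr : ∀ k, |x (k + 1) - φ| ≤ |x k - φ| / 2 := by
    intro k
    have hsq : x (k + 1) ^ 2 = 1 + x k := by
      rw [hx k]; exact Real.sq_sqrt (by linarith [hx_nn k])
    have hfac : (x (k + 1) - φ) * (x (k + 1) + φ) = x k - φ := by
      have : x (k+1) ^ 2 - φ ^ 2 = x k - φ := by rw [hsq, hφ_sq]; ring
      nlinarith [this]
    have habs : |x (k + 1) - φ| * (x (k + 1) + φ) = |x k - φ| := by
      rw [← abs_of_pos (show (0:ℝ) < x (k+1) + φ by linarith [hx_ge1 (k+1)]),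
        ← abs_mul, hfac]
    have hge2 : (2:ℝ) ≤ x (k + 1) + φ := by linarith [hx_ge1 (k + 1)]
    have h := abs_nonneg (x (k + 1) - φ)
    nlinarith
  have geo : ∀ k, |x k - φ| ≤ (1/2 : ℝ) ^ k * |x 0 - φ| := by
    intro k
    induction k with
    | zero => simp
    | succ k ih =>
      calc |x (k+1) - φ| ≤ |x k - φ| / 2 := hcontr k
        _ ≤ ((1/2:ℝ) ^ k * |x 0 - φ|) / 2 := by linarith
        _ = (1/2:ℝ) ^ (k+1) * |x 0 - φ| := by ring
  -- x tends to φ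
  have hx_tendsto : Filter.Tendsto x Filter.atTop (nhds φ) := by
    rw [tendsto_iff_dist_tendsto_zero]
    simp only [Real.dist_eq]
    have hgeo0 : Filter.Tendsto (fun k => (1/2:ℝ) ^ k * |x 0 - φ|)
        Filter.atTop (nhds 0) := by
      have := (tendsto_pow_atTop_nhds_zero_of_lt_one (by norm_num : (0:ℝ) ≤ 1/2)
        (by norm_num : (1/2:ℝ) < 1)).mul_const (|x 0 - φ|)
      simpa using this
    exact squeeze_zero (fun k => abs_nonneg _) geo hgeo0
  have hsub : Filter.Tendsto (fun n : ℕ => n - 1) Filter.atTop Filter.atTop :=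
    Filter.tendsto_sub_atTop_nat 1
  have hlim : Filter.Tendsto (fun n : ℕ => M * x (n - 1)) Filter.atTop
      (nhds (φ * M)) := by
    have := (hx_tendsto.comp hsub).const_mul M
    simpa [mul_comm] using this
  refine ⟨part1, part2, ?_⟩
  refine hlim.congr' ?_
  filter_upwards [Filter.eventually_ge_atTop 1] with n hn
  exact (part1 n hn).symm
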